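/- Let R be a domain over a field F, and let x, y be nonzero elements of R such that xy = γyx for some nonzero γ in F. If both x and y are FA-elements (i.e., for every a in R there is a polynomial f(t) = c₀tᴺ + c₁tᴺ⁻¹ + ⋯ + c_N with c₀, c_N ≠ 0 such that c₀xᴺa + c₁xᴺ⁻¹ax + ⋯ + c_N a xᴺ = 0, and similarly for y), then the product xy is also an FA-element of R. -/

import Mathlib

open Polynomial Finset



namespace IsFAMulAux

/-- triangle numbers: tri n = n(n-1)/2 -/
def tri : ℕ → ℕ
  | 0 => 0
  | n+1 => tri n + n

lemma two_tri (n : ℕ) : 2 * tri n + n = n * n := by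
  induction n with
  | zero => rfl
  | succ n ih => simp only [tri]; nlinarith [ih]

lemma tri_succ (n : ℕ) : tri (n+1) = tri n + n := rfl

lemma tri_add (a b : ℕ) : tri (a+b) = tri a + tri b + a*b := by
  induction b with
  | zero => simp [tri]
  | succ b ih =>
      have h : a + (b+1) = (a+b)+1 := rfl
      rw [h, tri_succ, ih, tri_succ]; ring

variable {F : Type*} [Field F]

lemma gd {γ δ : F} (h : γ * δ = 1) {A B A' B' : ℕ} (hh : A + B' = A' + B) :
    γ ^ A * δ ^ B = γ ^ A' * δ ^ B' := by
  have hγ : γ ≠ 0 := left_ne_zero_of_mul_eq_one h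
  apply mul_right_cancel₀ (b := γ ^ B * γ ^ B')
    (mul_ne_zero (pow_ne_zero _ hγ) (pow_ne_zero _ hγ))
  have e1 : γ ^ A * δ ^ B * (γ ^ B * γ ^ B') = γ ^ (A + B') * (γ*δ) ^ B := by ring
  have e2 : γ ^ A' * δ ^ B' * (γ ^ B * γ ^ B') = γ ^ (A' + B) * (γ*δ) ^ B' := by ring
  rw [e1, e2, h, one_pow, one_pow, hh]

variable {R : Type*} [Ring R] [Algebra F R]

section qswap

variable {γ δ : F} {u v : R}

lemma qswap (huv : u * v = γ • (v * u)) (p q : ℕ) :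
    u ^ p * v ^ q = γ ^ (p * q) • (v ^ q * u ^ p) := by
  have base : ∀ q : ℕ, u * v ^ q = γ ^ q • (v ^ q * u) := by
    intro q
    induction q with
    | zero => simp
    | succ q ih =>
        rw [pow_succ, ← mul_assoc, ih, smul_mul_assoc, mul_assoc, huv,
          mul_smul_comm, smul_smul, pow_succ, mul_assoc]
  induction p with
  | zero => simp
  | succ p ih =>
      rw [pow_succ, mul_assoc, base, mul_smul_comm, ← mul_assoc, ih,
        smul_mul_assoc, smul_smul, mul_assoc, ← pow_succ, ← pow_add]
      congr 2
      ring

lemma qswap' (hδ : γ * δ = 1) (huv : u * v = γ • (v * u)) (p q : ℕ) :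
    v ^ q * u ^ p = δ ^ (p * q) • (u ^ p * v ^ q) := by
  have h1 : δ ^ (p*q) • (u ^ p * v ^ q) = (δ ^ (p*q) * γ ^ (p*q)) • (v ^ q * u ^ p) := by
    rw [qswap huv, smul_smul]
  rw [h1, ← mul_pow, mul_comm δ γ, hδ, one_pow, one_smul]

end qswap


section ring

variable {γ δ : F} {x y w : R}

variable (hδ : γ * δ = 1) (hxy : x * y = γ • (y * x)) (hw : w = x * y)

include hxy hw in
lemma hxw : x * w = γ • (w * x) := by
  rw [hw, mul_assoc, ← mul_smul_comm, ← hxy, ← mul_assoc]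

include hxy hw in
lemma hyw : w * y = γ • (y * w) := by
  rw [hw]
  calc (x*y)*y = (γ • (y*x)) * y := by rw [← hxy]
  _ = γ • (y * (x*y)) := by rw [smul_mul_assoc, mul_assoc]

-- contextual swap with trailing factor
lemma cswap {u v : R} (huv : u * v = γ • (v * u)) (p q : ℕ) (z : R) :
    u ^ p * (v ^ q * z) = γ ^ (p * q) • (v ^ q * (u ^ p * z)) := by
  rw [← mul_assoc, qswap huv, smul_mul_assoc, mul_assoc]

include hδ in
lemma cswap' {u v : R} (huv : u * v = γ • (v * u)) (p q : ℕ) (z : R) :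
    v ^ q * (u ^ p * z) = δ ^ (p * q) • (u ^ p * (v ^ q * z)) := by
  rw [← mul_assoc, qswap' hδ huv, smul_mul_assoc, mul_assoc]

include hδ hxy hw in
lemma w_xy (k : ℕ) : w ^ k = δ ^ (tri k) • (x ^ k * y ^ k) := by
  induction k with
  | zero => simp [tri]
  | succ k ih =>
      have hyx : y ^ k * x = δ ^ k • (x * y ^ k) := by simpa using qswap' hδ hxy 1 k
      calc w^(k+1) = w^k * w := pow_succ w k
      _ = (δ ^ (tri k) • (x ^ k * y ^ k)) * (x * y) := by rw [ih, hw]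
      _ = δ ^ (tri k) • (x ^ k * ((y ^ k * x) * y)) := by
            rw [smul_mul_assoc, mul_assoc, mul_assoc, ← mul_assoc (y^k) x y]
      _ = δ ^ (tri k) • (δ ^ k • (x ^ k * ((x * y ^ k) * y))) := by
            rw [hyx, smul_mul_assoc, mul_smul_comm]
      _ = (δ ^ (tri k) * δ ^ k) • ((x ^ k * x) * (y ^ k * y)) := by
            rw [smul_smul]
            congr 1
            rw [mul_assoc (x^k) x (y^k * y), mul_assoc x (y^k) y]
      _ = δ ^ (tri (k+1)) • (x ^ (k+1) * y ^ (k+1)) := by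
            rw [← pow_succ, ← pow_succ, ← pow_add, tri_succ]

include hδ hxy hw in
lemma w_yx (k : ℕ) : w ^ k = γ ^ (tri k + k) • (y ^ k * x ^ k) := by
  rw [w_xy hδ hxy hw, qswap hxy, smul_smul]
  congr 1
  have h2 := two_tri k
  calc δ ^ tri k * γ ^ (k * k) = γ ^ (k*k) * δ ^ (tri k) := by ring
  _ = γ ^ (tri k + k) * δ ^ 0 := gd hδ (by linarith)
  _ = γ ^ (tri k + k) := by simp


lemma cross2 (p j k q u : ℕ) :
    (j*q + (tri j + j) + j*u) + (p*((q+(j+k))+u) + tri (j+k)) = 0 + ((p+j)*((q+(j+k))+u) + tri k) := by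
  rw [tri_add]
  have h2 : 2 * (tri j : ℤ) + (j:ℤ) = (j:ℤ) * j := by exact_mod_cast two_tri j
  zify
  linear_combination h2

include hδ hxy hw in
lemma term1 (a : R) (p n i q u v : ℕ) :
    δ ^ ((p+n) * (q+u)) • (x ^ (p+n) * w ^ q * a * w ^ u * x ^ (i+v))
    = (γ ^ ((i+n)*q) * δ ^ ((p+(i+n)) * (q+u))) • ((x^p * w^q) * ((x^n * a * x^i) * (w^u * x^v))) := by
  have hxw' := hxw hxy hw
  simp only [pow_add, mul_assoc, smul_mul_assoc, mul_smul_comm, smul_smul]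
  rw [cswap (γ := γ) hxw' n q (a * (w^u * (x^i * x^v)))]
  rw [cswap' hδ hxw' i u (x^v)]
  simp only [mul_smul_comm, smul_smul]
  congr 1
  calc δ ^ ((p+n) * (q+u)) * (γ ^ (n*q) * δ ^ (i*u))
      = γ ^ (n*q) * δ ^ ((p+n)*(q+u) + i*u) := by ring
    _ = γ ^ ((i+n)*q) * δ ^ ((p+(i+n)) * (q+u)) := gd hδ (by ring)

include hδ hxy hw in
lemma term2 (a : R) (p j k q u v : ℕ) :
    δ ^ ((p+j) * ((q+(j+k))+u)) • (x ^ (p+j) * w ^ (q+k) * a * w ^ (j+u) * x ^ (k+v))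
    = δ ^ (p*((q+(j+k))+u) + tri (j+k)) • ((x^p * w^q * x^(j+k)) * ((y^k * a * y^j) * (w^u * x^((j+k)+v)))) := by
  have hxw' := hxw hxy hw
  have s2 : ∀ z : R, w^k * z = δ ^ (tri k) • (x^k * (y^k * z)) := by
    intro z; rw [w_xy hδ hxy hw k, smul_mul_assoc, mul_assoc]
  have s3 : ∀ z : R, w^j * z = γ ^ (tri j + j) • (y^j * (x^j * z)) := by
    intro z; rw [w_yx hδ hxy hw j, smul_mul_assoc, mul_assoc]
  simp only [pow_add, mul_assoc, smul_mul_assoc, mul_smul_comm, smul_smul]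
  rw [cswap (γ := γ) hxw' j q (w^k * (a * (w^j * (w^u * (x^k * x^v)))))]
  rw [s2 (a * (w^j * (w^u * (x^k * x^v))))]
  rw [s3 (w^u * (x^k * x^v))]
  rw [cswap (γ := γ) hxw' j u (x^k * x^v)]
  simp only [mul_smul_comm, smul_smul]
  congr 1
  calc δ ^ ((p+j) * ((q+(j+k))+u)) * (γ ^ (j*q) * (δ ^ (tri k) * (γ ^ (tri j + j) * γ ^ (j*u))))
      = γ ^ (j*q + (tri j + j) + j*u) * δ ^ ((p+j)*((q+(j+k))+u) + tri k) := by ring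
    _ = γ ^ 0 * δ ^ (p*((q+(j+k))+u) + tri (j+k)) := gd hδ (cross2 p j k q u)
    _ = δ ^ (p*((q+(j+k))+u) + tri (j+k)) := by rw [pow_zero, one_mul]
    _ = δ ^ (p*((q+(j+k))+u)) * δ ^ (tri (j+k)) := pow_add δ _ _


include hδ hxy hw in
lemma core1 (a : R) (S T N : ℕ) (c : ℕ → F)
    (Hx : ∑ i ∈ range (N+1), c i • (x ^ (N-i) * a * x ^ i) = 0)
    (p q : ℕ) (hp : p + N ≤ S) (hq : q ≤ T) :
    ∑ i ∈ range (N+1), c i • (δ ^ ((p + (N-i)) * T) •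
      (x ^ (p + (N-i)) * w ^ q * a * w ^ (T-q) * x ^ (S - (p + (N-i))))) = 0 := by
  have key : ∀ i ∈ range (N+1),
      c i • (δ ^ ((p + (N-i)) * T) • (x ^ (p + (N-i)) * w ^ q * a * w ^ (T-q) * x ^ (S - (p + (N-i)))))
      = (γ ^ (N*q) * δ ^ ((p+N) * T)) •
          ((x^p * w^q) * ((c i • (x^(N-i) * a * x^i)) * (w^(T-q) * x^(S-(p+N))))) := by
    intro i hi
    have hi' : i ≤ N := by simpa [Nat.lt_succ_iff] using hi
    have h1 : q + (T - q) = T := by omega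
    have h2 : i + (S - (p+N)) = S - (p + (N-i)) := by omega
    have h3 : i + (N-i) = N := by omega
    have t := term1 hδ hxy hw a p (N-i) i q (T-q) (S-(p+N))
    rw [h3, h1, h2] at t
    rw [t, smul_mul_assoc, mul_smul_comm, smul_comm, smul_smul]
  rw [Finset.sum_congr rfl key, ← Finset.smul_sum, ← Finset.mul_sum, ← Finset.sum_mul, Hx,
    zero_mul, mul_zero, smul_zero]

include hδ hxy hw in
lemma core2 (a : R) (S T M : ℕ) (d : ℕ → F)
    (Hy : ∑ j ∈ range (M+1), d j • (y ^ (M-j) * a * y ^ j) = 0)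
    (p q : ℕ) (hp : p + M ≤ S) (hq : q + M ≤ T) :
    ∑ j ∈ range (M+1), d j • (δ ^ ((p + j) * T) •
      (x ^ (p + j) * w ^ (q + (M-j)) * a * w ^ (T-(q+(M-j))) * x ^ (S - (p + j)))) = 0 := by
  have key : ∀ j ∈ range (M+1),
      d j • (δ ^ ((p + j) * T) • (x ^ (p + j) * w ^ (q + (M-j)) * a * w ^ (T-(q+(M-j))) * x ^ (S - (p + j))))
      = (δ ^ (p * T + tri M)) •
          ((x^p * w^q * x^M) * ((d j • (y^(M-j) * a * y^j)) * (w^(T-(q+M)) * x^(M + (S-(p+M)))))) := by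
    intro j hj
    have hj' : j ≤ M := by simpa [Nat.lt_succ_iff] using hj
    have h1 : q + M + (T-(q+M)) = T := by omega
    have h2 : j + (T-(q+M)) = T - (q + (M-j)) := by omega
    have h3 : j + (M-j) = M := by omega
    have h4 : (M-j) + (S-(p+M)) = S - (p + j) := by omega
    have t := term2 hδ hxy hw a p j (M-j) q (T-(q+M)) (S-(p+M))
    rw [h3, h1, h2, h4] at t
    rw [t, smul_mul_assoc, mul_smul_comm, smul_comm, smul_smul]
  rw [Finset.sum_congr rfl key, ← Finset.smul_sum, ← Finset.mul_sum, ← Finset.sum_mul, Hy,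
    zero_mul, mul_zero, smul_zero]

end ring
end IsFAMulAux


namespace IsFAMulAux2

variable {F : Type*} [Field F]

lemma commkey (N M : ℕ) (hN : 1 ≤ N) (hM : 1 ≤ M) (c d : ℕ → F)
    (hc0 : c 0 ≠ 0) (hcN : c N ≠ 0) (hd0 : d 0 ≠ 0) (hdM : d M ≠ 0) :
    ∃ (χ : Polynomial F) (P Q : Polynomial (Polynomial F)),
      χ.Monic ∧ χ.coeff 0 ≠ 0 ∧
      χ.map (C : F →+* Polynomial F)
        = P * Polynomial.C (∑ i ∈ range (N+1), monomial (N-i) (c i))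
          + Q * (∑ j ∈ range (M+1), Polynomial.C (monomial j (d j)) * X ^ (M-j)) := by
  classical
  set fs : Polynomial F := ∑ i ∈ range (N+1), monomial (N-i) (c i) with hfs_def
  have hcoeffN : fs.coeff N = c 0 := by
    rw [hfs_def, finset_sum_coeff]
    rw [Finset.sum_eq_single 0 (fun b hb hb0 => by
      rw [coeff_monomial, if_neg]; simp only [mem_range] at hb; omega)
      (fun h => absurd (mem_range.mpr (by omega)) h)]
    simp [coeff_monomial]
  have hcoeff0 : fs.coeff 0 = c N := by
    rw [hfs_def, finset_sum_coeff]
    rw [Finset.sum_eq_single N (fun b hb hb0 => by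
      rw [coeff_monomial, if_neg]; simp only [mem_range] at hb; omega)
      (fun h => absurd (mem_range.mpr (by omega)) h)]
    simp [coeff_monomial]
  have hdegfs : fs.natDegree = N := by
    refine le_antisymm (natDegree_sum_le_of_forall_le _ _ fun i _ =>
      (natDegree_monomial_le _).trans (by omega)) (le_natDegree_of_ne_zero ?_)
    rw [hcoeffN]; exact hc0
  set fs' : Polynomial F := C ((c 0)⁻¹) * fs with hfs'_def
  have hfs'monic : fs'.Monic := by
    refine monic_of_natDegree_le_of_coeff_eq_one N ((natDegree_C_mul_le _ _).trans hdegfs.le) ?_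
    rw [hfs'_def, coeff_C_mul, hcoeffN, inv_mul_cancel₀ hc0]
  have hdegfs' : fs'.natDegree = N := by
    refine le_antisymm ((natDegree_C_mul_le _ _).trans hdegfs.le) (le_natDegree_of_ne_zero ?_)
    rw [hfs'_def, coeff_C_mul, hcoeffN, inv_mul_cancel₀ hc0]; exact one_ne_zero
  set A := AdjoinRoot fs' with hA_def
  set α : A := AdjoinRoot.root fs' with hα_def
  have hdim : (AdjoinRoot.powerBasis' hfs'monic).dim = N := by
    rw [AdjoinRoot.powerBasis'_dim, hdegfs']
  haveI : Nontrivial A :=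
    nontrivial_of_ne ((AdjoinRoot.powerBasis' hfs'monic).basis ⟨0, by rw [hdim]; omega⟩) 0
      (Module.Basis.ne_zero _ _)
  haveI hfinFA : Module.Finite F A := (AdjoinRoot.powerBasis' hfs'monic).finite
  have hfseq : fs = C (c 0) * fs' := by
    rw [hfs'_def, ← mul_assoc, ← C_mul, mul_inv_cancel₀ hc0, C_1, one_mul]
  have heq : ∑ i ∈ range (N+1), algebraMap F A (c i) * α ^ (N-i) = 0 := by
    have h1 : aeval α fs = 0 := by
      rw [AdjoinRoot.aeval_eq, hfseq, map_mul, AdjoinRoot.mk_self, mul_zero]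
    rw [hfs_def] at h1
    simpa only [map_sum, aeval_monomial] using h1
  have hαu : IsUnit α := by
    have hz : α * (∑ i ∈ range N, algebraMap F A (c i) * α ^ (N-1-i))
        = ∑ i ∈ range N, algebraMap F A (c i) * α ^ (N-i) := by
      rw [Finset.mul_sum]
      refine Finset.sum_congr rfl fun i hi => ?_
      simp only [mem_range] at hi
      have h2 : N - i = (N-1-i) + 1 := by omega
      rw [h2, pow_succ]; ring
    have hsplit : (∑ i ∈ range N, algebraMap F A (c i) * α ^ (N-i)) + algebraMap F A (c N) = 0 := by
      rw [← heq, Finset.sum_range_succ]; simp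
    have hfin : α * (∑ i ∈ range N, algebraMap F A (c i) * α ^ (N-1-i)) = - algebraMap F A (c N) := by
      rw [hz]; exact eq_neg_of_add_eq_zero_left hsplit
    have hru : IsUnit (α * (∑ i ∈ range N, algebraMap F A (c i) * α ^ (N-1-i))) := by
      rw [hfin]
      exact (IsUnit.map (algebraMap F A) (isUnit_iff_ne_zero.2 hcN)).neg
    exact isUnit_of_mul_isUnit_left hru
  -- the second layer
  set GA : Polynomial A := ∑ j ∈ range (M+1), C (algebraMap F A (d j) * α^j) * X^(M-j) with hGA_def
  have hcoeffM : GA.coeff M = algebraMap F A (d 0) := by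
    rw [hGA_def, finset_sum_coeff]
    rw [Finset.sum_eq_single 0 (fun b hb hb0 => by
      rw [coeff_C_mul_X_pow, if_neg]; simp only [mem_range] at hb; omega)
      (fun h => absurd (mem_range.mpr (by omega)) h)]
    simp [coeff_C_mul_X_pow]
  have hdegGA : GA.natDegree = M := by
    refine le_antisymm (natDegree_sum_le_of_forall_le _ _ fun j _ =>
      (natDegree_C_mul_X_pow_le _ _).trans (by omega)) (le_natDegree_of_ne_zero ?_)
    rw [hcoeffM]
    intro h
    exact hd0 ((map_eq_zero_iff (algebraMap F A) (algebraMap F A).injective).mp h)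
  set GA' : Polynomial A := C (algebraMap F A ((d 0)⁻¹)) * GA with hGA'_def
  have hGA'monic : GA'.Monic := by
    refine monic_of_natDegree_le_of_coeff_eq_one M ((natDegree_C_mul_le _ _).trans hdegGA.le) ?_
    rw [hGA'_def, coeff_C_mul, hcoeffM, ← map_mul, inv_mul_cancel₀ hd0, map_one]
  have hdegGA' : GA'.natDegree = M := by
    refine le_antisymm ((natDegree_C_mul_le _ _).trans hdegGA.le) (le_natDegree_of_ne_zero ?_)
    rw [hGA'_def, coeff_C_mul, hcoeffM, ← map_mul, inv_mul_cancel₀ hd0, map_one]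
    exact one_ne_zero
  set Qr := AdjoinRoot GA' with hQr_def
  set β : Qr := AdjoinRoot.root GA' with hβ_def
  set αQ : Qr := algebraMap A Qr α with hαQ_def
  have hdim2 : (AdjoinRoot.powerBasis' hGA'monic).dim = M := by
    rw [AdjoinRoot.powerBasis'_dim, hdegGA']
  haveI : Nontrivial Qr :=
    nontrivial_of_ne ((AdjoinRoot.powerBasis' hGA'monic).basis ⟨0, by rw [hdim2]; omega⟩) 0
      (Module.Basis.ne_zero _ _)
  haveI hfinAQ : Module.Finite A Qr := (AdjoinRoot.powerBasis' hGA'monic).finite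
  haveI hfinFQ : Module.Finite F Qr := Module.Finite.trans A Qr
  have hGAeq : GA = C (algebraMap F A (d 0)) * GA' := by
    rw [hGA'_def, ← mul_assoc, ← C_mul, ← map_mul, mul_inv_cancel₀ hd0, map_one, C_1, one_mul]
  have heq2 : ∑ j ∈ range (M+1), algebraMap F Qr (d j) * αQ^j * β ^ (M-j) = 0 := by
    have h1 : aeval β GA = 0 := by
      rw [AdjoinRoot.aeval_eq, hGAeq, map_mul, AdjoinRoot.mk_self, mul_zero]
    rw [hGA_def] at h1
    simp only [map_sum, map_mul, map_pow, aeval_C, aeval_X] at h1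
    rw [← h1]
    refine Finset.sum_congr rfl fun j hj => ?_
    simp only [map_mul, map_pow, ← IsScalarTower.algebraMap_apply F A Qr, hαQ_def]
  have hβu : IsUnit β := by
    have hz : β * (∑ j ∈ range M, algebraMap F Qr (d j) * αQ^j * β ^ (M-1-j))
        = ∑ j ∈ range M, algebraMap F Qr (d j) * αQ^j * β ^ (M-j) := by
      rw [Finset.mul_sum]
      refine Finset.sum_congr rfl fun j hj => ?_
      simp only [mem_range] at hj
      have h2 : M - j = (M-1-j) + 1 := by omega
      rw [h2, pow_succ]; ring
    have hsplit : (∑ j ∈ range M, algebraMap F Qr (d j) * αQ^j * β ^ (M-j))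
        + algebraMap F Qr (d M) * αQ^M = 0 := by
      rw [← heq2, Finset.sum_range_succ]; simp
    have hfin : β * (∑ j ∈ range M, algebraMap F Qr (d j) * αQ^j * β ^ (M-1-j))
        = -(algebraMap F Qr (d M) * αQ^M) := by
      rw [hz]; exact eq_neg_of_add_eq_zero_left hsplit
    have hru : IsUnit (β * (∑ j ∈ range M, algebraMap F Qr (d j) * αQ^j * β ^ (M-1-j))) := by
      rw [hfin]
      exact ((IsUnit.map (algebraMap F Qr) (isUnit_iff_ne_zero.2 hdM)).mul
        ((hαu.map (algebraMap A Qr)).pow M)).neg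
    exact isUnit_of_mul_isUnit_left hru
  -- minimal polynomial
  have hβint : IsIntegral F β := IsIntegral.of_finite F β
  set χ : Polynomial F := minpoly F β with hχ_def
  have hχmonic : χ.Monic := minpoly.monic hβint
  have hχ0 : χ.coeff 0 ≠ 0 := by
    intro h0
    obtain ⟨p, hp⟩ := X_dvd_iff.mpr h0
    have hpmonic : p.Monic := (monic_X).of_mul_monic_left (hp ▸ hχmonic)
    have haev : aeval β p = 0 := by
      have h1 := minpoly.aeval F β
      rw [← hχ_def, hp, map_mul, aeval_X] at h1
      exact (hβu.mul_right_eq_zero).mp h1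
    have hmin := minpoly.min F β hpmonic haev
    have hdd : χ.natDegree = 1 + p.natDegree := by
      rw [hp, Monic.natDegree_mul monic_X hpmonic, natDegree_X]
    have hle : χ.natDegree ≤ p.natDegree := natDegree_le_natDegree (hχ_def ▸ hmin)
    omega
  -- division step back in F[s][t]
  set Gs : Polynomial (Polynomial F) := ∑ j ∈ range (M+1), C (monomial j (d j)) * X^(M-j)
    with hGs_def
  have hcoeffMGs : Gs.coeff M = C (d 0) := by
    rw [hGs_def, finset_sum_coeff]
    rw [Finset.sum_eq_single 0 (fun b hb hb0 => by
      rw [coeff_C_mul_X_pow, if_neg]; simp only [mem_range] at hb; omega)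
      (fun h => absurd (mem_range.mpr (by omega)) h)]
    simp [coeff_C_mul_X_pow, ← Polynomial.C_0, Polynomial.monomial_zero_left]
  have hdegGs : Gs.natDegree = M := by
    refine le_antisymm (natDegree_sum_le_of_forall_le _ _ fun j _ =>
      (natDegree_C_mul_X_pow_le _ _).trans (by omega)) (le_natDegree_of_ne_zero ?_)
    rw [hcoeffMGs]
    simp only [ne_eq, Polynomial.C_eq_zero]
    exact hd0
  set Gs' : Polynomial (Polynomial F) := C (C ((d 0)⁻¹)) * Gs with hGs'_def
  have hGs'monic : Gs'.Monic := by
    refine monic_of_natDegree_le_of_coeff_eq_one M ((natDegree_C_mul_le _ _).trans hdegGs.le) ?_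
    rw [hGs'_def, coeff_C_mul, hcoeffMGs, ← C_mul, inv_mul_cancel₀ hd0, C_1]
  have hdegGs' : Gs'.natDegree = M := by
    refine le_antisymm ((natDegree_C_mul_le _ _).trans hdegGs.le) (le_natDegree_of_ne_zero ?_)
    rw [hGs'_def, coeff_C_mul, hcoeffMGs, ← C_mul, inv_mul_cancel₀ hd0, C_1]
    exact one_ne_zero
  set χB : Polynomial (Polynomial F) := χ.map (C : F →+* Polynomial F) with hχB_def
  have key0 : χB = Gs' * (χB /ₘ Gs') + χB %ₘ Gs' := by
    rw [add_comm]
    exact (modByMonic_add_div χB Gs').symm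
  set φ : Polynomial (Polynomial F) →+* Polynomial A := Polynomial.mapRingHom (AdjoinRoot.mk fs')
    with hφ_def
  have hmkC : ∀ r : F, AdjoinRoot.mk fs' (C r) = algebraMap F A r := by
    intro r
    rw [AdjoinRoot.mk_C, ← AdjoinRoot.algebraMap_eq]
  have hφGs : φ Gs = GA := by
    rw [hGs_def, hGA_def, hφ_def]
    rw [map_sum]
    refine Finset.sum_congr rfl fun j hj => ?_
    simp only [coe_mapRingHom, Polynomial.map_mul, Polynomial.map_pow, Polynomial.map_C,
      Polynomial.map_X]
    congr 1
    rw [← C_mul_X_pow_eq_monomial, map_mul, AdjoinRoot.mk_C, map_pow, AdjoinRoot.mk_X,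
      ← AdjoinRoot.algebraMap_eq]
  have hφGs' : φ Gs' = GA' := by
    rw [hGs'_def, map_mul, hGA'_def, hφGs]
    congr 1
    rw [hφ_def]
    simp only [coe_mapRingHom, Polynomial.map_C]
    rw [hmkC]
  have hφχB : φ χB = χ.map (algebraMap F A) := by
    rw [hχB_def, hφ_def]
    simp only [coe_mapRingHom]
    rw [Polynomial.map_map,
      show (AdjoinRoot.mk fs').comp (C : F →+* Polynomial F) = algebraMap F A from
        RingHom.ext fun r => hmkC r]
  have happ : AdjoinRoot.mk GA' (φ (χB %ₘ Gs')) = 0 := by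
    have h1 := congrArg (fun z => AdjoinRoot.mk GA' (φ z)) key0
    simp only [map_add, map_mul, hφGs', AdjoinRoot.mk_self, zero_mul, zero_add] at h1
    rw [← h1, hφχB, ← AdjoinRoot.aeval_eq, aeval_map_algebraMap]
    exact minpoly.aeval F β
  have hr0 : φ (χB %ₘ Gs') = 0 := by
    obtain ⟨h, hh⟩ := AdjoinRoot.mk_eq_zero.mp happ
    by_contra hne
    have hh0 : h ≠ 0 := by
      rintro rfl
      rw [mul_zero] at hh
      exact hne hh
    have hdeg1 : (φ (χB %ₘ Gs')).degree = h.degree + GA'.degree := by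
      rw [hh, mul_comm, Monic.degree_mul hGA'monic]
    have hlt : (φ (χB %ₘ Gs')).degree < GA'.degree :=
      lt_of_le_of_lt degree_map_le (by
        have h2 := degree_modByMonic_lt χB hGs'monic
        have hdd : Gs'.degree = GA'.degree := by
          rw [degree_eq_natDegree (hGs'monic.ne_zero), degree_eq_natDegree (hGA'monic.ne_zero),
            hdegGs', hdegGA']
        rwa [hdd] at h2)
    rw [hdeg1] at hlt
    rw [degree_eq_natDegree hh0, degree_eq_natDegree (hGA'monic.ne_zero)] at hlt
    rw [← Nat.cast_add] at hlt
    exact absurd (Nat.cast_lt.mp hlt) (by omega)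
  have hdvd : C fs' ∣ (χB %ₘ Gs') := by
    rw [C_dvd_iff_dvd_coeff]
    intro k
    have h1 : (φ (χB %ₘ Gs')).coeff k = 0 := by rw [hr0]; simp
    rw [hφ_def, coe_mapRingHom, coeff_map] at h1
    exact AdjoinRoot.mk_eq_zero.mp h1
  obtain ⟨Pr, hPr⟩ := hdvd
  refine ⟨χ, Pr * C (C ((c 0)⁻¹)), (χB /ₘ Gs') * C (C ((d 0)⁻¹)), hχmonic, hχ0, ?_⟩
  have e1 : (C fs' : Polynomial (Polynomial F)) = C (C ((c 0)⁻¹)) * C fs := by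
    rw [hfs'_def, map_mul]
  calc χ.map (C : F →+* Polynomial F) = χB := hχB_def.symm
  _ = Gs' * (χB /ₘ Gs') + χB %ₘ Gs' := key0
  _ = Gs' * (χB /ₘ Gs') + C fs' * Pr := by rw [hPr]
  _ = Pr * C (C ((c 0)⁻¹)) * C fs + (χB /ₘ Gs') * C (C ((d 0)⁻¹)) * Gs := by
      rw [e1, hGs'_def]; ring

end IsFAMulAux2


namespace IsFAMulAux3

variable {F : Type*} [Field F] {R : Type*} [Ring R] [Algebra F R]

noncomputable def EvFun (E : ℕ → ℕ → R) (S T : ℕ) (u : Polynomial (Polynomial F)) : R :=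
  ∑ θ ∈ range (T+1), ∑ π ∈ range (S+1), ((u.coeff θ).coeff π) • E π θ

lemma EvFun_add (E : ℕ → ℕ → R) (S T : ℕ) (u v : Polynomial (Polynomial F)) :
    EvFun E S T (u + v) = EvFun E S T u + EvFun E S T v := by
  unfold EvFun
  simp only [coeff_add, add_smul, Finset.sum_add_distrib]

lemma EvFun_zero (E : ℕ → ℕ → R) (S T : ℕ) :
    EvFun E S T (0 : Polynomial (Polynomial F)) = 0 := by
  unfold EvFun; simp

lemma EvFun_sum {ι : Type*} (E : ℕ → ℕ → R) (S T : ℕ) (s : Finset ι)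
    (g : ι → Polynomial (Polynomial F)) :
    EvFun E S T (∑ μ ∈ s, g μ) = ∑ μ ∈ s, EvFun E S T (g μ) := by
  classical
  induction s using Finset.induction with
  | empty => rw [Finset.sum_empty, Finset.sum_empty]; exact EvFun_zero E S T
  | insert _ _ h ih => rw [Finset.sum_insert h, Finset.sum_insert h, EvFun_add, ih]

lemma EvFun_single (E : ℕ → ℕ → R) (S T π θ : ℕ) (e : F) (hπ : π ≤ S) (hθ : θ ≤ T) :
    EvFun E S T (C (monomial π e) * X^θ) = e • E π θ := by
  unfold EvFun
  simp only [coeff_C_mul_X_pow]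
  rw [Finset.sum_eq_single θ (fun b hb hbne => by rw [if_neg hbne]; simp)
    (fun h => absurd (mem_range.mpr (by omega)) h)]
  rw [if_pos rfl]
  rw [Finset.sum_eq_single π (fun b hb hbne => by
      rw [coeff_monomial, if_neg (fun hh => hbne hh.symm), zero_smul])
    (fun h => absurd (mem_range.mpr (by omega)) h)]
  rw [coeff_monomial, if_pos rfl]

lemma EvVanishF (E : ℕ → ℕ → R) (S T N : ℕ) (c : ℕ → F)
    (hcore : ∀ p q : ℕ, p + N ≤ S → q ≤ T →
      ∑ i ∈ range (N+1), c i • E (p + (N-i)) q = 0)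
    (P : Polynomial (Polynomial F))
    (hS : ∀ θ : ℕ, (P.coeff θ).natDegree + N ≤ S)
    (hT : P.natDegree ≤ T) :
    EvFun E S T (P * C (∑ i ∈ range (N+1), monomial (N-i) (c i))) = 0 := by
  classical
  conv_lhs => rw [P.as_sum_support, Finset.sum_mul]
  rw [EvFun_sum]
  refine Finset.sum_eq_zero fun θ hθs => ?_
  have hθT : θ ≤ T := le_trans (le_natDegree_of_mem_supp θ hθs) hT
  have hexp : (P.coeff θ) * (∑ i ∈ range (N+1), monomial (N-i) (c i))
      = ∑ π ∈ (P.coeff θ).support, ∑ i ∈ range (N+1),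
          monomial (π+(N-i)) ((P.coeff θ).coeff π * c i) := by
    conv_lhs => rw [(P.coeff θ).as_sum_support, Finset.sum_mul]
    refine Finset.sum_congr rfl fun π hπ => ?_
    rw [Finset.mul_sum]
    refine Finset.sum_congr rfl fun i hi => monomial_mul_monomial _ _ _ _
  have hCX : (monomial θ (P.coeff θ) : Polynomial (Polynomial F))
      * C (∑ i ∈ range (N+1), monomial (N-i) (c i))
      = ∑ π ∈ (P.coeff θ).support, ∑ i ∈ range (N+1),
          C (monomial (π+(N-i)) ((P.coeff θ).coeff π * c i)) * X^θ := by
    rw [← C_mul_X_pow_eq_monomial, mul_right_comm, ← C_mul, hexp, map_sum, Finset.sum_mul]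
    refine Finset.sum_congr rfl fun π hπ => ?_
    rw [map_sum, Finset.sum_mul]
  rw [hCX, EvFun_sum]
  refine Finset.sum_eq_zero fun π hπ => ?_
  rw [EvFun_sum]
  have hπS : ∀ i, π + (N - i) ≤ S := fun i =>
    le_trans (by
      have := le_natDegree_of_mem_supp π hπ
      have := hS θ
      omega) (le_refl S)
  calc ∑ i ∈ range (N+1), EvFun E S T (C (monomial (π+(N-i)) ((P.coeff θ).coeff π * c i)) * X^θ)
      = ∑ i ∈ range (N+1), ((P.coeff θ).coeff π) • (c i • E (π+(N-i)) θ) := by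
        refine Finset.sum_congr rfl fun i hi => ?_
        rw [EvFun_single E S T _ _ _ (hπS i) hθT, mul_smul]
    _ = ((P.coeff θ).coeff π) • ∑ i ∈ range (N+1), c i • E (π+(N-i)) θ := by
        rw [Finset.smul_sum]
    _ = 0 := by rw [hcore π θ (by have := hπS 0; omega) hθT, smul_zero]

lemma EvVanishG (E : ℕ → ℕ → R) (S T M : ℕ) (d : ℕ → F)
    (hcore : ∀ p q : ℕ, p + M ≤ S → q + M ≤ T →
      ∑ j ∈ range (M+1), d j • E (p + j) (q + (M-j)) = 0)
    (Q : Polynomial (Polynomial F))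
    (hS : ∀ θ : ℕ, (Q.coeff θ).natDegree + M ≤ S)
    (hT : Q.natDegree + M ≤ T) :
    EvFun E S T (Q * (∑ j ∈ range (M+1), C (monomial j (d j)) * X^(M-j))) = 0 := by
  classical
  conv_lhs => rw [Q.as_sum_support, Finset.sum_mul]
  rw [EvFun_sum]
  refine Finset.sum_eq_zero fun θ hθs => ?_
  have hθT : θ + M ≤ T := by
    have := le_natDegree_of_mem_supp θ hθs
    omega
  have hCX : (monomial θ (Q.coeff θ) : Polynomial (Polynomial F))
      * (∑ j ∈ range (M+1), C (monomial j (d j)) * X^(M-j))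
      = ∑ j ∈ range (M+1), ∑ π ∈ (Q.coeff θ).support,
          C (monomial (π+j) ((Q.coeff θ).coeff π * d j)) * X^(θ+(M-j)) := by
    rw [← C_mul_X_pow_eq_monomial, Finset.mul_sum]
    refine Finset.sum_congr rfl fun j hj => ?_
    rw [show C (Q.coeff θ) * X^θ * (C (monomial j (d j)) * X^(M-j))
        = C ((Q.coeff θ) * monomial j (d j)) * X^(θ+(M-j)) from by
      rw [mul_mul_mul_comm, ← C_mul, ← pow_add]]
    conv_lhs => rw [(Q.coeff θ).as_sum_support, Finset.sum_mul]
    rw [map_sum, Finset.sum_mul]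
    refine Finset.sum_congr rfl fun π hπ => ?_
    rw [monomial_mul_monomial]
  rw [hCX, EvFun_sum]
  simp only [EvFun_sum]
  rw [Finset.sum_comm]
  refine Finset.sum_eq_zero fun π hπ => ?_
  have hπS : ∀ j, j ≤ M → π + j ≤ S := fun j hj => by
    have := le_natDegree_of_mem_supp π hπ
    have := hS θ
    omega
  calc ∑ j ∈ range (M+1), EvFun E S T (C (monomial (π+j) ((Q.coeff θ).coeff π * d j)) * X^(θ+(M-j)))
      = ∑ j ∈ range (M+1), ((Q.coeff θ).coeff π) • (d j • E (π+j) (θ+(M-j))) := by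
        refine Finset.sum_congr rfl fun j hj => ?_
        simp only [mem_range] at hj
        rw [EvFun_single E S T _ _ _ (hπS j (by omega)) (by omega), mul_smul]
    _ = ((Q.coeff θ).coeff π) • ∑ j ∈ range (M+1), d j • E (π+j) (θ+(M-j)) := by
        rw [Finset.smul_sum]
    _ = 0 := by rw [hcore π θ (hπS M le_rfl) hθT, smul_zero]

lemma EvChi (E : ℕ → ℕ → R) (S T : ℕ) (χ : Polynomial F) :
    EvFun E S T (χ.map (C : F →+* Polynomial F)) = ∑ θ ∈ range (T+1), χ.coeff θ • E 0 θ := by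
  unfold EvFun
  refine Finset.sum_congr rfl fun θ hθ => ?_
  simp only [coeff_map]
  rw [Finset.sum_eq_single 0 (fun b hb hbne => by rw [coeff_C, if_neg hbne, zero_smul])
    (fun h => absurd (mem_range.mpr (by omega)) h)]
  rw [coeff_C, if_pos rfl]

end IsFAMulAux3


/-- `x` is an element of finite adjoint action (FA-element) in the domain `R` over
the field `F`: `x` is nonzero (hence not a zero divisor in the domain `R`), and for
every `a ∈ R` there is a polynomial `f(t) = c₀ t^N + c₁ t^(N-1) + ⋯ + c_N` over `F`
with `c₀ ≠ 0`, `c_N ≠ 0` such that `c₀ x^N a + c₁ x^(N-1) a x + ⋯ + c_N a x^N = 0`. -/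
def IsFA (F : Type*) {R : Type*} [Field F] [Ring R] [Algebra F R] (x : R) : Prop :=
  x ≠ 0 ∧ ∀ a : R, ∃ (N : ℕ) (c : ℕ → F), c 0 ≠ 0 ∧ c N ≠ 0 ∧
    ∑ i ∈ Finset.range (N + 1), c i • (x ^ (N - i) * a * x ^ i) = 0

open Polynomial Finset IsFAMulAux IsFAMulAux2 IsFAMulAux3 in
/-- If `x`, `y` are FA-elements of a domain `R` over a field `F` and `x y = γ y x`
for some nonzero `γ ∈ F`, then `x y` is also an FA-element. -/
theorem isFA_mul_of_qCommute {F R : Type*} [Field F] [Ring R] [IsDomain R] [Algebra F R]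
    (x y : R) (γ : F) (hγ : γ ≠ 0) (hxy : x * y = γ • (y * x))
    (hx : IsFA F x) (hy : IsFA F y) : IsFA F (x * y) := by
  classical
  obtain ⟨hx0, hxall⟩ := hx
  obtain ⟨hy0, hyall⟩ := hy
  refine ⟨mul_ne_zero hx0 hy0, fun a => ?_⟩
  by_cases ha : a = 0
  · exact ⟨0, fun _ => 1, one_ne_zero, one_ne_zero, by simp [ha]⟩
  obtain ⟨N, c, hc0, hcN, Hx⟩ := hxall a
  obtain ⟨M, d, hd0, hdM, Hy⟩ := hyall a
  have hN : 1 ≤ N := by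
    by_contra h
    have hN0 : N = 0 := by omega
    subst hN0
    rw [Finset.sum_range_one] at Hx
    simp only [Nat.sub_zero, pow_zero, one_mul, mul_one] at Hx
    exact ha ((smul_eq_zero.mp Hx).resolve_left hc0)
  have hM : 1 ≤ M := by
    by_contra h
    have hM0 : M = 0 := by omega
    subst hM0
    rw [Finset.sum_range_one] at Hy
    simp only [Nat.sub_zero, pow_zero, one_mul, mul_one] at Hy
    exact ha ((smul_eq_zero.mp Hy).resolve_left hd0)
  set w := x * y with hw
  set δ := γ⁻¹ with hδdef
  have hδ : γ * δ = 1 := mul_inv_cancel₀ hγ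
  obtain ⟨χ, P, Q, hχmonic, hχ0, hkey⟩ := commkey N M hN hM c d hc0 hcN hd0 hdM
  set D := χ.natDegree with hD
  set SP := P.support.sup (fun θ => (P.coeff θ).natDegree) with hSP
  set SQ := Q.support.sup (fun θ => (Q.coeff θ).natDegree) with hSQ
  set S := N + M + SP + SQ with hSdef
  set T := D + M + P.natDegree + Q.natDegree with hTdef
  set E : ℕ → ℕ → R := fun π θ => δ ^ (π*T) • (x^π * w^θ * a * w^(T-θ) * x^(S-π)) with hE
  clear_value D SP SQ S T
  have hcore1 : ∀ p q : ℕ, p + N ≤ S → q ≤ T →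
      ∑ i ∈ range (N+1), c i • E (p + (N-i)) q = 0 := by
    intro p q hp hq
    simp only [hE]
    exact core1 hδ hxy hw a S T N c Hx p q hp hq
  have hcore2 : ∀ p q : ℕ, p + M ≤ S → q + M ≤ T →
      ∑ j ∈ range (M+1), d j • E (p + j) (q + (M-j)) = 0 := by
    intro p q hp hq
    simp only [hE]
    exact core2 hδ hxy hw a S T M d Hy p q hp hq
  have hSP' : ∀ θ : ℕ, (P.coeff θ).natDegree + N ≤ S := by
    intro θ
    by_cases hθ : θ ∈ P.support
    · have h1 := Finset.le_sup (f := fun θ => (P.coeff θ).natDegree) hθ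
      rw [← hSP] at h1
      rw [hSdef]
      omega
    · rw [notMem_support_iff.mp hθ, natDegree_zero, hSdef]
      omega
  have hSQ' : ∀ θ : ℕ, (Q.coeff θ).natDegree + M ≤ S := by
    intro θ
    by_cases hθ : θ ∈ Q.support
    · have h1 := Finset.le_sup (f := fun θ => (Q.coeff θ).natDegree) hθ
      rw [← hSQ] at h1
      rw [hSdef]
      omega
    · rw [notMem_support_iff.mp hθ, natDegree_zero, hSdef]
      omega
  have hTP : P.natDegree ≤ T := by rw [hTdef]; omega
  have hTQ : Q.natDegree + M ≤ T := by rw [hTdef]; omega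
  have h0 : EvFun E S T (χ.map (C : F →+* Polynomial F)) = 0 := by
    rw [hkey, EvFun_add, EvVanishF E S T N c hcore1 P hSP' hTP,
      EvVanishG E S T M d hcore2 Q hSQ' hTQ, add_zero]
  rw [EvChi] at h0
  have hE0 : ∀ θ : ℕ, E 0 θ = (w^θ * a * w^(T-θ)) * x^S := by
    intro θ
    simp only [hE]
    rw [Nat.zero_mul, pow_zero, one_smul, pow_zero, one_mul, Nat.sub_zero]
  have h1 : (∑ θ ∈ range (T+1), χ.coeff θ • (w^θ * a * w^(T-θ))) * x^S = 0 := by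
    rw [Finset.sum_mul, ← h0]
    exact Finset.sum_congr rfl fun θ _ => by rw [hE0, smul_mul_assoc]
  have h2 : ∑ θ ∈ range (T+1), χ.coeff θ • (w^θ * a * w^(T-θ)) = 0 :=
    (mul_eq_zero.mp h1).resolve_right (pow_ne_zero _ hx0)
  have hDT : D ≤ T := by rw [hTdef]; omega
  have h3 : ∑ θ ∈ range (D+1), χ.coeff θ • (w^θ * a * w^(T-θ)) = 0 := by
    rw [← h2]
    refine Finset.sum_subset (by intro t ht; simp only [mem_range] at *; omega) ?_
    intro θ hθT hθD
    simp only [mem_range] at hθT hθD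
    rw [coeff_eq_zero_of_natDegree_lt (by omega), zero_smul]
  have h4 : (∑ θ ∈ range (D+1), χ.coeff θ • (w^θ * a * w^(D-θ))) * w^(T-D) = 0 := by
    rw [Finset.sum_mul, ← h3]
    refine Finset.sum_congr rfl fun θ hθ => ?_
    simp only [mem_range] at hθ
    have hexp : D - θ + (T - D) = T - θ := by omega
    rw [smul_mul_assoc, mul_assoc, ← pow_add, hexp]
  have hw0 : w ≠ 0 := mul_ne_zero hx0 hy0
  have h5 : ∑ θ ∈ range (D+1), χ.coeff θ • (w^θ * a * w^(D-θ)) = 0 :=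
    (mul_eq_zero.mp h4).resolve_right (pow_ne_zero _ hw0)
  refine ⟨D, fun i => χ.coeff (D - i), ?_, ?_, ?_⟩
  · show χ.coeff (D - 0) ≠ 0
    rw [Nat.sub_zero, hD, hχmonic.coeff_natDegree]
    exact one_ne_zero
  · show χ.coeff (D - D) ≠ 0
    rw [Nat.sub_self]
    exact hχ0
  · calc ∑ i ∈ range (D+1), χ.coeff (D-i) • (w^(D-i) * a * w^i)
        = ∑ i ∈ range (D+1),
            (fun j => χ.coeff j • (w^j * a * w^(D-j))) ((D+1) - 1 - i) := by
          refine Finset.sum_congr rfl fun i hi => ?_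
          simp only [mem_range] at hi
          have he1 : (D+1) - 1 - i = D - i := by omega
          have he2 : D - (D - i) = i := by omega
          simp only [he1, he2]
      _ = ∑ j ∈ range (D+1), χ.coeff j • (w^j * a * w^(D-j)) := by
          have hrefl := Finset.sum_range_reflect
            (fun j => χ.coeff j • (w^j * a * w^(D-j))) (D+1)
          simpa using hrefl
      _ = 0 := h5
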